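/- Let P1 be a linear prevision on G(X1) and P2 a linear prevision on G(X2), viewed as coherent conditional lower previsions on { (f, X_i) : f ∈ G(X_i) }, and let 𝔅_1 ⊆ P_∅(X1), 𝔅_2 ⊆ P_∅(X2). Then for every gamble f on X1×X2, the function P2(f) : X1 → ℝ defined by P2(f)(x1) := P2(f(x1,·)) is a gamble on X1, and (P1⊗P2)(f) ≤ P1(P2(f)) ≤ −(P1⊗P2)(−f), where (P1⊗P2)(·) abbreviates (P1⊗P2)(·|X1×X2) and P1⊗P2 is the independent natural extension of P1 and P2 to C(X1×X2). -/

import Mathlib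

open scoped BigOperators

namespace IPaper

variable {X : Type*}

/-- A gamble on `X`: a bounded real-valued function. -/
def IsGamble (f : X → ℝ) : Prop := ∃ M : ℝ, ∀ x, |f x| ≤ M

/-- The indicator gamble of an event. -/
noncomputable def ind (B : Set X) : X → ℝ := Set.indicator B 1

/-- The set `G_{>0}(X)` of nonnegative nonzero gambles. -/
def Gpos (X : Type*) : Set (X → ℝ) := {f | IsGamble f ∧ 0 ≤ f ∧ f ≠ 0}

/-- A coherent set of desirable gambles. -/
structure CoherentSDG (D : Set (X → ℝ)) : Prop where
  subset_gambles : ∀ f ∈ D, IsGamble f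
  d1 : ∀ f : X → ℝ, IsGamble f → 0 ≤ f → f ≠ 0 → f ∈ D
  d2 : ∀ f ∈ D, ∀ l : ℝ, 0 < l → l • f ∈ D
  d3 : ∀ f ∈ D, ∀ g ∈ D, f + g ∈ D
  d4 : ∀ f : X → ℝ, f ≤ 0 → f ∉ D

/-- `posi A`: positive linear hull of `A`. -/
def posi (A : Set (X → ℝ)) : Set (X → ℝ) :=
  {g | ∃ (n : ℕ) (l : Fin (n + 1) → ℝ) (h : Fin (n + 1) → X → ℝ),
    (∀ i, 0 < l i) ∧ (∀ i, h i ∈ A) ∧ g = ∑ i, l i • h i}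

/-- `E(A) := posi (A ∪ G_{>0}(X))`. -/
def natExtSet (A : Set (X → ℝ)) : Set (X → ℝ) := posi (A ∪ Gpos X)

/-- `C(X)`: all pairs of a gamble and a nonempty event. -/
def domC (X : Type*) : Set ((X → ℝ) × Set X) := {p | IsGamble p.1 ∧ p.2.Nonempty}

/-- The conditional lower prevision `lp_D` derived from a set of gambles `D`. -/
noncomputable def lpOf (D : Set (X → ℝ)) (f : X → ℝ) (B : Set X) : EReal :=
  sSup (Real.toEReal '' {m : ℝ | (fun x => (f x - m) * ind B x) ∈ D})

/-- Coherence (Williams) of a conditional lower prevision on a domain `C`. -/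
def Coherent (C : Set ((X → ℝ) × Set X)) (lp : (X → ℝ) → Set X → EReal) : Prop :=
  ∃ D : Set (X → ℝ), CoherentSDG D ∧ ∀ p ∈ C, lp p.1 p.2 = lpOf D p.1 p.2

/-- The set `A_lp`. -/
def Alp (C : Set ((X → ℝ) × Set X)) (lp : (X → ℝ) → Set X → EReal) : Set (X → ℝ) :=
  {g | ∃ p ∈ C, ∃ m : ℝ, (m : EReal) < lp p.1 p.2 ∧ g = fun x => (p.1 x - m) * ind p.2 x}

/-- `E(lp) := E(A_lp)`. -/
def ElpSet (C : Set ((X → ℝ) × Set X)) (lp : (X → ℝ) → Set X → EReal) : Set (X → ℝ) :=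
  natExtSet (Alp C lp)

/-- The natural extension of `lp` to all of `C(X)`. -/
noncomputable def natExtLP (C : Set ((X → ℝ) × Set X)) (lp : (X → ℝ) → Set X → EReal)
    (f : X → ℝ) (B : Set X) : EReal :=
  lpOf (ElpSet C lp) f B

/-- Simple `B`-measurable gamble. -/
def SimpleMeas (Bfam : Set (Set X)) (g : X → ℝ) : Prop :=
  ∃ (c0 : ℝ) (n : ℕ) (c : Fin n → ℝ) (Bs : Fin n → Set X),
    0 ≤ c0 ∧ (∀ i, 0 ≤ c i) ∧ (∀ i, Bs i ∈ Bfam) ∧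
    g = fun x => c0 + ∑ i, c i * ind (Bs i) x

/-- `B`-measurable gamble: uniform limit of nonnegative simple `B`-measurable gambles. -/
def BMeas (Bfam : Set (Set X)) (g : X → ℝ) : Prop :=
  ∃ gs : ℕ → X → ℝ, (∀ n, 0 ≤ gs n ∧ SimpleMeas Bfam (gs n)) ∧
    TendstoUniformly gs g Filter.atTop

/-- A conditional linear prevision on `C(X)`: a coherent self-conjugate conditional
lower prevision on the full domain. -/
def CondLinPrev (P : (X → ℝ) → Set X → EReal) : Prop :=
  Coherent (domC X) P ∧ ∀ p ∈ domC X, P p.1 p.2 = -P (-p.1) p.2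

section Product

variable {X1 X2 : Type*}

/-- `A_{1→2}`. -/
def A12 (D2 : Set (X2 → ℝ)) (F1 : Set (Set X1)) : Set (X1 × X2 → ℝ) :=
  {g | ∃ f2 ∈ D2, ∃ B1 ∈ F1 ∪ {Set.univ}, g = fun p => f2 p.2 * ind B1 p.1}

/-- `A_{2→1}`. -/
def A21 (D1 : Set (X1 → ℝ)) (F2 : Set (Set X2)) : Set (X1 × X2 → ℝ) :=
  {g | ∃ f1 ∈ D1, ∃ B2 ∈ F2 ∪ {Set.univ}, g = fun p => f1 p.1 * ind B2 p.2}

/-- `D1 ⊗ D2`, relative to the families of conditioning events `F1`, `F2`. -/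
def indNatExt (D1 : Set (X1 → ℝ)) (D2 : Set (X2 → ℝ))
    (F1 : Set (Set X1)) (F2 : Set (Set X2)) : Set (X1 × X2 → ℝ) :=
  natExtSet (A12 D2 F1 ∪ A21 D1 F2)

/-- `marg_1(D)`. -/
def marg1 (D : Set (X1 × X2 → ℝ)) : Set (X1 → ℝ) :=
  {f | IsGamble f ∧ (fun p : X1 × X2 => f p.1) ∈ D}

/-- `marg_2(D)`. -/
def marg2 (D : Set (X1 × X2 → ℝ)) : Set (X2 → ℝ) :=
  {f | IsGamble f ∧ (fun p : X1 × X2 => f p.2) ∈ D}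

/-- `marg_1(D|B2)`. -/
def marg1c (D : Set (X1 × X2 → ℝ)) (B2 : Set X2) : Set (X1 → ℝ) :=
  {f | IsGamble f ∧ (fun p : X1 × X2 => f p.1 * ind B2 p.2) ∈ D}

/-- `marg_2(D|B1)`. -/
def marg2c (D : Set (X1 × X2 → ℝ)) (B1 : Set X1) : Set (X2 → ℝ) :=
  {f | IsGamble f ∧ (fun p : X1 × X2 => f p.2 * ind B1 p.1) ∈ D}

/-- Epistemic independence of a set of desirable gambles on `X1 × X2`. -/
def EpIndSDG (F1 : Set (Set X1)) (F2 : Set (Set X2)) (D : Set (X1 × X2 → ℝ)) : Prop :=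
  (∀ B2 ∈ F2, marg1c D B2 = marg1 D) ∧ (∀ B1 ∈ F1, marg2c D B1 = marg2 D)

/-- Independent product (of sets of desirable gambles). -/
def IndProductSDG (F1 : Set (Set X1)) (F2 : Set (Set X2))
    (D1 : Set (X1 → ℝ)) (D2 : Set (X2 → ℝ)) (D : Set (X1 × X2 → ℝ)) : Prop :=
  CoherentSDG D ∧ EpIndSDG F1 F2 D ∧ marg1 D = D1 ∧ marg2 D = D2

/-- The independent natural extension `lp1 ⊗ lp2` on `C(X1 × X2)`. -/
noncomputable def lpProd (C1 : Set ((X1 → ℝ) × Set X1)) (lp1 : (X1 → ℝ) → Set X1 → EReal)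
    (C2 : Set ((X2 → ℝ) × Set X2)) (lp2 : (X2 → ℝ) → Set X2 → EReal)
    (F1 : Set (Set X1)) (F2 : Set (Set X2)) :
    (X1 × X2 → ℝ) → Set (X1 × X2) → EReal :=
  lpOf (indNatExt (ElpSet C1 lp1) (ElpSet C2 lp2) F1 F2)

/-- An independent domain `C ⊆ C(X1 × X2)`. -/
def IndepDomain (F1 : Set (Set X1)) (F2 : Set (Set X2))
    (C : Set ((X1 × X2 → ℝ) × Set (X1 × X2))) : Prop :=
  (∀ (f1 : X1 → ℝ) (B1 : Set X1), IsGamble f1 → B1.Nonempty → ∀ B2 ∈ F2,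
    (((fun p : X1 × X2 => f1 p.1), B1 ×ˢ (Set.univ : Set X2)) ∈ C ↔
      ((fun p : X1 × X2 => f1 p.1), B1 ×ˢ B2) ∈ C)) ∧
  (∀ (f2 : X2 → ℝ) (B2 : Set X2), IsGamble f2 → B2.Nonempty → ∀ B1 ∈ F1,
    (((fun p : X1 × X2 => f2 p.2), (Set.univ : Set X1) ×ˢ B2) ∈ C ↔
      ((fun p : X1 × X2 => f2 p.2), B1 ×ˢ B2) ∈ C))

/-- Epistemic independence of a conditional lower prevision on a domain `C`. -/
def EpIndLP (F1 : Set (Set X1)) (F2 : Set (Set X2))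
    (C : Set ((X1 × X2 → ℝ) × Set (X1 × X2)))
    (lp : (X1 × X2 → ℝ) → Set (X1 × X2) → EReal) : Prop :=
  (∀ (f1 : X1 → ℝ) (B1 : Set X1), IsGamble f1 → B1.Nonempty →
    ((fun p : X1 × X2 => f1 p.1), B1 ×ˢ (Set.univ : Set X2)) ∈ C → ∀ B2 ∈ F2,
    lp (fun p : X1 × X2 => f1 p.1) (B1 ×ˢ (Set.univ : Set X2)) =
      lp (fun p : X1 × X2 => f1 p.1) (B1 ×ˢ B2)) ∧
  (∀ (f2 : X2 → ℝ) (B2 : Set X2), IsGamble f2 → B2.Nonempty →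
    ((fun p : X1 × X2 => f2 p.2), (Set.univ : Set X1) ×ˢ B2) ∈ C → ∀ B1 ∈ F1,
    lp (fun p : X1 × X2 => f2 p.2) ((Set.univ : Set X1) ×ˢ B2) =
      lp (fun p : X1 × X2 => f2 p.2) (B1 ×ˢ B2))

/-- Independent product of two conditional lower previsions, on the joint domain `C`. -/
def IndProductLP (F1 : Set (Set X1)) (F2 : Set (Set X2))
    (C1 : Set ((X1 → ℝ) × Set X1)) (lp1 : (X1 → ℝ) → Set X1 → EReal)
    (C2 : Set ((X2 → ℝ) × Set X2)) (lp2 : (X2 → ℝ) → Set X2 → EReal)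
    (C : Set ((X1 × X2 → ℝ) × Set (X1 × X2)))
    (lp : (X1 × X2 → ℝ) → Set (X1 × X2) → EReal) : Prop :=
  Coherent C lp ∧ EpIndLP F1 F2 C lp ∧
  (∀ p ∈ C1, lp (fun q : X1 × X2 => p.1 q.1) (p.2 ×ˢ (Set.univ : Set X2)) = lp1 p.1 p.2) ∧
  (∀ p ∈ C2, lp (fun q : X1 × X2 => p.1 q.2) ((Set.univ : Set X1) ×ˢ p.2) = lp2 p.1 p.2)

end Product



/-! ### Auxiliary lemmas for the proof of `stmt19` -/

section AuxStmt19
set_option linter.unusedSectionVars false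
variable {Y : Type*} [Nonempty Y]

omit [Nonempty Y] in
lemma isGamble_add' {f g : Y → ℝ} (hf : IsGamble f) (hg : IsGamble g) :
    IsGamble (fun x => f x + g x) := by
  obtain ⟨M, hM⟩ := hf; obtain ⟨N, hN⟩ := hg
  exact ⟨M + N, fun x => (abs_add_le _ _).trans (add_le_add (hM x) (hN x))⟩

omit [Nonempty Y] in
lemma isGamble_sub_const' {g : Y → ℝ} (hg : IsGamble g) (c : ℝ) :
    IsGamble (fun x => g x - c) := by
  obtain ⟨M, hM⟩ := hg
  exact ⟨M + |c|, fun x => (abs_sub _ _).trans (add_le_add (hM x) le_rfl)⟩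

omit [Nonempty Y] in
lemma isGamble_smul' (c : ℝ) {g : Y → ℝ} (hg : IsGamble g) :
    IsGamble (fun x => c * g x) := by
  obtain ⟨M, hM⟩ := hg
  exact ⟨|c| * M, fun x => by
    rw [abs_mul]; exact mul_le_mul_of_nonneg_left (hM x) (abs_nonneg c)⟩

omit [Nonempty Y] in
lemma isGamble_sum' {ι : Type*} (s : Finset ι) (h : ι → Y → ℝ)
    (hg : ∀ i, IsGamble (h i)) : IsGamble (fun x => ∑ i ∈ s, h i x) := by
  classical
  induction s using Finset.cons_induction with
  | empty => exact ⟨0, fun x => by simp⟩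
  | cons a s ha ih =>
    have : IsGamble (fun x => h a x + ∑ i ∈ s, h i x) := isGamble_add' (hg a) ih
    obtain ⟨M, hM⟩ := this
    exact ⟨M, fun x => by simp only [Finset.sum_cons]; exact hM x⟩

omit [Nonempty Y] in
lemma ind_abs_le' (B : Set Y) (x : Y) : |ind B x| ≤ 1 := by
  simp only [ind, Set.indicator, Pi.one_apply]
  split <;> norm_num

omit [Nonempty Y] in
lemma ind_nonneg' (B : Set Y) (x : Y) : 0 ≤ ind B x := by
  simp only [ind, Set.indicator, Pi.one_apply]
  split <;> norm_num

omit [Nonempty Y] in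
lemma isGamble_ind' (B : Set Y) : IsGamble (ind B) := ⟨1, ind_abs_le' B⟩

/-- The set of acceptable buying prices for `g` (conditioning on `univ`). -/
def SS (D : Set (Y → ℝ)) (g : Y → ℝ) : Set ℝ := {m | (fun x => g x - m) ∈ D}

/-- The real-valued lower prevision associated with `D` (unconditional). -/
noncomputable def rp (D : Set (Y → ℝ)) (g : Y → ℝ) : ℝ := sSup (SS D g)

lemma mem_SS_of_lt {D : Set (Y → ℝ)} (hD : CoherentSDG D) {g : Y → ℝ} {M : ℝ}
    (hM : ∀ x, |g x| ≤ M) {m : ℝ} (hm : m < -M) : m ∈ SS D g := by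
  have hpos : ∀ x, 0 < g x - m := by
    intro x
    have := (abs_le.1 (hM x)).1
    linarith
  refine hD.d1 _ (isGamble_sub_const' ⟨M, hM⟩ m) (fun x => (hpos x).le) ?_
  intro h0
  obtain ⟨x⟩ := ‹Nonempty Y›
  have := congrFun h0 x
  simp only [Pi.zero_apply] at this
  exact absurd this (ne_of_gt (hpos x))

omit [Nonempty Y] in
lemma SS_le {D : Set (Y → ℝ)} (hD : CoherentSDG D) {g : Y → ℝ} {M : ℝ}
    (hM : ∀ x, |g x| ≤ M) : ∀ m ∈ SS D g, m ≤ M := by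
  intro m hm
  by_contra h
  push_neg at h
  refine hD.d4 (fun x => g x - m) (fun x => ?_) hm
  have := (abs_le.1 (hM x)).2
  simp only [Pi.zero_apply]
  linarith

lemma SS_nonempty {D : Set (Y → ℝ)} (hD : CoherentSDG D) {g : Y → ℝ}
    (hg : IsGamble g) : (SS D g).Nonempty := by
  obtain ⟨M, hM⟩ := hg
  exact ⟨-(M + 1), mem_SS_of_lt hD hM (by linarith)⟩

omit [Nonempty Y] in
lemma SS_bddAbove {D : Set (Y → ℝ)} (hD : CoherentSDG D) {g : Y → ℝ}
    (hg : IsGamble g) : BddAbove (SS D g) := by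
  obtain ⟨M, hM⟩ := hg
  exact ⟨M, fun m hm => SS_le hD hM m hm⟩

lemma rp_bounds {D : Set (Y → ℝ)} (hD : CoherentSDG D) {g : Y → ℝ} {M : ℝ}
    (hM : ∀ x, |g x| ≤ M) : -M ≤ rp D g ∧ rp D g ≤ M := by
  constructor
  · refine le_of_forall_pos_le_add fun e he => ?_
    have hmem : -M - e ∈ SS D g := mem_SS_of_lt hD hM (by linarith)
    have := le_csSup (SS_bddAbove hD ⟨M, hM⟩) hmem
    unfold rp; linarith
  · exact csSup_le (SS_nonempty hD ⟨M, hM⟩) (SS_le hD hM)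

lemma rp_zero {D : Set (Y → ℝ)} (hD : CoherentSDG D) :
    rp D (fun _ => (0:ℝ)) = 0 := by
  have h := rp_bounds (M := 0) hD (g := fun _ => (0:ℝ)) (by intro x; simp)
  linarith [h.1, h.2]

lemma lpOf_univ_eq {D : Set (Y → ℝ)} (hD : CoherentSDG D) {g : Y → ℝ}
    (hg : IsGamble g) : lpOf D g Set.univ = ((rp D g : ℝ) : EReal) := by
  have hset : {m : ℝ | (fun x => (g x - m) * ind Set.univ x) ∈ D} = SS D g := by
    ext m
    simp only [SS, Set.mem_setOf_eq, ind, Set.indicator_univ, Pi.one_apply, mul_one]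
  rw [lpOf, hset]
  apply le_antisymm
  · refine sSup_le fun x hx => ?_
    obtain ⟨m, hm, rfl⟩ := hx
    exact EReal.coe_le_coe_iff.2 (le_csSup (SS_bddAbove hD hg) hm)
  · rw [le_sSup_iff]
    intro b hb
    induction b with
    | bot =>
      obtain ⟨m, hm⟩ := SS_nonempty hD hg
      exact absurd (hb ⟨m, hm, rfl⟩) (by simp)
    | coe r =>
      refine EReal.coe_le_coe_iff.2 (csSup_le (SS_nonempty hD hg) fun m hm => ?_)
      exact EReal.coe_le_coe_iff.1 (hb ⟨m, hm, rfl⟩)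
    | top => exact le_top

lemma rp_nonneg {D : Set (Y → ℝ)} (hD : CoherentSDG D) {g : Y → ℝ}
    (hg : IsGamble g) (h0 : ∀ x, 0 ≤ g x) : 0 ≤ rp D g := by
  obtain ⟨M, hM⟩ := hg
  refine le_of_forall_pos_le_add fun e he => ?_
  have hmem : -e ∈ SS D g := by
    have hpos : ∀ x, 0 < g x - (-e) := fun x => by have := h0 x; linarith
    refine hD.d1 _ (isGamble_sub_const' ⟨M, hM⟩ _) (fun x => (hpos x).le) ?_
    intro hz
    obtain ⟨x⟩ := ‹Nonempty Y›
    have := congrFun hz x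
    simp only [Pi.zero_apply] at this
    exact absurd this (ne_of_gt (hpos x))
  have := le_csSup (SS_bddAbove hD ⟨M, hM⟩) hmem
  unfold rp; linarith

lemma rp_mono {D : Set (Y → ℝ)} (hD : CoherentSDG D) {f g : Y → ℝ}
    (hf : IsGamble f) (hg : IsGamble g) (hle : ∀ x, f x ≤ g x) :
    rp D f ≤ rp D g := by
  refine csSup_le (SS_nonempty hD hf) fun m hm => le_csSup (SS_bddAbove hD hg) ?_
  by_cases hfg : (fun x => g x - f x) = 0
  · have : (fun x => g x - m) = (fun x => f x - m) := by
      funext x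
      have := congrFun hfg x
      simp only [Pi.zero_apply] at this
      have : g x = f x := by linarith
      rw [this]
    rw [SS, Set.mem_setOf_eq, this]; exact hm
  · have hd : (fun x => g x - f x) ∈ D := by
      refine hD.d1 _ ?_ (fun x => by simp only [Pi.zero_apply]; linarith [hle x]) hfg
      obtain ⟨M, hM⟩ := hf; obtain ⟨N, hN⟩ := hg
      exact ⟨N + M, fun x => (abs_sub _ _).trans (add_le_add (hN x) (hM x))⟩
    have hsum := hD.d3 _ hm _ hd
    have heq : (fun x => f x - m) + (fun x => g x - f x) = fun x => g x - m := by
      funext x; simp only [Pi.add_apply]; ring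
    rwa [SS, Set.mem_setOf_eq, ← heq]

lemma rp_superadd {D : Set (Y → ℝ)} (hD : CoherentSDG D) {f g : Y → ℝ}
    (hf : IsGamble f) (hg : IsGamble g) :
    rp D f + rp D g ≤ rp D (fun x => f x + g x) := by
  have hfg : IsGamble (fun x => f x + g x) := isGamble_add' hf hg
  have key : ∀ m ∈ SS D f, ∀ n ∈ SS D g, m + n ∈ SS D (fun x => f x + g x) := by
    intro m hm n hn
    have hsum := hD.d3 _ hm _ hn
    have heq : (fun x => f x - m) + (fun x => g x - n) = fun x => (f x + g x) - (m + n) := by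
      funext x; simp only [Pi.add_apply]; ring
    rwa [SS, Set.mem_setOf_eq, ← heq]
  have h1 : ∀ m ∈ SS D f, rp D g ≤ rp D (fun x => f x + g x) - m := by
    intro m hm
    refine csSup_le (SS_nonempty hD hg) fun n hn => ?_
    have := le_csSup (SS_bddAbove hD hfg) (key m hm n hn)
    unfold rp at this ⊢; linarith
  have h2 : rp D f ≤ rp D (fun x => f x + g x) - rp D g := by
    refine csSup_le (SS_nonempty hD hf) fun m hm => ?_
    have := h1 m hm; linarith
  linarith

lemma rp_sub_const {D : Set (Y → ℝ)} (hD : CoherentSDG D) {g : Y → ℝ}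
    (hg : IsGamble g) (c : ℝ) :
    rp D (fun x => g x - c) = rp D g - c := by
  have hgc : IsGamble (fun x => g x - c) := isGamble_sub_const' hg c
  have key : ∀ m : ℝ, m ∈ SS D (fun x => g x - c) ↔ (m + c) ∈ SS D g := by
    intro m
    have heq : (fun x => (g x - c) - m) = fun x => g x - (m + c) := by
      funext x; ring
    rw [SS, SS, Set.mem_setOf_eq, Set.mem_setOf_eq, heq]
  apply le_antisymm
  · refine csSup_le (SS_nonempty hD hgc) fun m hm => ?_
    have := le_csSup (SS_bddAbove hD hg) ((key m).1 hm)
    unfold rp; linarith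
  · rw [sub_le_iff_le_add]
    refine csSup_le (SS_nonempty hD hg) fun m hm => ?_
    have hmem : m - c ∈ SS D (fun x => g x - c) := (key _).2 (by rwa [sub_add_cancel])
    have := le_csSup (SS_bddAbove hD hgc) hmem
    unfold rp at this ⊢; linarith

lemma rp_smul_pos {D : Set (Y → ℝ)} (hD : CoherentSDG D) {g : Y → ℝ}
    (hg : IsGamble g) {c : ℝ} (hc : 0 < c) :
    rp D (fun x => c * g x) = c * rp D g := by
  have hcg : IsGamble (fun x => c * g x) := isGamble_smul' c hg
  have key : ∀ m : ℝ, m ∈ SS D g → c * m ∈ SS D (fun x => c * g x) := by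
    intro m hm
    have hsm := hD.d2 _ hm c hc
    have heq : c • (fun x => g x - m) = fun x => c * g x - c * m := by
      funext x; simp only [Pi.smul_apply, smul_eq_mul]; ring
    rwa [SS, Set.mem_setOf_eq, ← heq]
  have key' : ∀ m : ℝ, m ∈ SS D (fun x => c * g x) → m / c ∈ SS D g := by
    intro m hm
    have hsm := hD.d2 _ hm (1/c) (by positivity)
    have heq : (1/c) • (fun x => c * g x - m) = fun x => g x - m / c := by
      funext x; simp only [Pi.smul_apply, smul_eq_mul]; field_simp
    rwa [SS, Set.mem_setOf_eq, ← heq]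
  apply le_antisymm
  · refine csSup_le (SS_nonempty hD hcg) fun m hm => ?_
    have hle : m / c ≤ rp D g := le_csSup (SS_bddAbove hD hg) (key' m hm)
    calc m = c * (m / c) := by field_simp
    _ ≤ c * rp D g := by nlinarith
  · have hle : rp D g ≤ rp D (fun x => c * g x) / c := by
      refine csSup_le (SS_nonempty hD hg) fun m hm => ?_
      have := le_csSup (SS_bddAbove hD hcg) (key m hm)
      rw [le_div_iff₀ hc]
      unfold rp at this ⊢; linarith [mul_comm m c]
    calc c * rp D g ≤ c * (rp D (fun x => c * g x) / c) := by nlinarith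
    _ = rp D (fun x => c * g x) := by field_simp

lemma rp_comb {D : Set (Y → ℝ)} (hD : CoherentSDG D) {ι : Type*} (s : Finset ι)
    (l : ι → ℝ) (h : ι → Y → ℝ) (hl : ∀ i, 0 < l i) (hg : ∀ i, IsGamble (h i)) :
    ∑ i ∈ s, l i * rp D (h i) ≤ rp D (fun x => ∑ i ∈ s, l i * h i x) := by
  classical
  induction s using Finset.cons_induction with
  | empty =>
    simp only [Finset.sum_empty]
    exact le_of_eq (rp_zero hD).symm
  | cons a s ha ih =>
    simp only [Finset.sum_cons]
    have hka : IsGamble (fun x => l a * h a x) := isGamble_smul' _ (hg a)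
    have hsg : IsGamble (fun x => ∑ i ∈ s, l i * h i x) :=
      isGamble_sum' s (fun i => fun x => l i * h i x) (fun i => isGamble_smul' _ (hg i))
    have h1 : rp D (fun x => l a * h a x) + rp D (fun x => ∑ i ∈ s, l i * h i x) ≤
        rp D (fun x => l a * h a x + ∑ i ∈ s, l i * h i x) :=
      rp_superadd hD hka hsg
    have h2 : rp D (fun x => l a * h a x) = l a * rp D (h a) :=
      rp_smul_pos hD (hg a) (hl a)
    linarith

lemma rp_neg {D : Set (Y → ℝ)} (hD : CoherentSDG D) {P : (Y → ℝ) → Set Y → EReal}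
    (hP : ∀ p ∈ ({p : (Y → ℝ) × Set Y | IsGamble p.1 ∧ p.2 = Set.univ}), P p.1 p.2 = lpOf D p.1 p.2)
    (hc : ∀ g : Y → ℝ, IsGamble g → P g Set.univ = -P (-g) Set.univ)
    {g : Y → ℝ} (hg : IsGamble g) : rp D (fun x => -g x) = -rp D g := by
  obtain ⟨M, hM⟩ := hg
  have hng : IsGamble (fun x => -g x) := ⟨M, fun x => by rw [abs_neg]; exact hM x⟩
  have h1 : P g Set.univ = ((rp D g : ℝ) : EReal) := by
    have := hP (g, Set.univ) ⟨⟨M, hM⟩, rfl⟩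
    rw [this]; exact lpOf_univ_eq hD ⟨M, hM⟩
  have h2 : P (-g) Set.univ = ((rp D (fun x => -g x) : ℝ) : EReal) := by
    have := hP (-g, Set.univ) ⟨hng, rfl⟩
    rw [this]; exact lpOf_univ_eq hD hng
  have h3 := hc g ⟨M, hM⟩
  rw [h1, h2] at h3
  rw [← EReal.coe_neg] at h3
  have := EReal.coe_eq_coe_iff.1 h3
  linarith

lemma rp_smul_all {D : Set (Y → ℝ)} (hD : CoherentSDG D) {P : (Y → ℝ) → Set Y → EReal}
    (hP : ∀ p ∈ ({p : (Y → ℝ) × Set Y | IsGamble p.1 ∧ p.2 = Set.univ}), P p.1 p.2 = lpOf D p.1 p.2)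
    (hc : ∀ g : Y → ℝ, IsGamble g → P g Set.univ = -P (-g) Set.univ)
    {g : Y → ℝ} (hg : IsGamble g) (c : ℝ) : rp D (fun x => c * g x) = c * rp D g := by
  rcases lt_trichotomy c 0 with hlt | rfl | hgt
  · have h1 : rp D (fun x => -((-c) * g x)) = -rp D (fun x => (-c) * g x) :=
      rp_neg hD hP hc (isGamble_smul' (-c) hg)
    have h2 : rp D (fun x => (-c) * g x) = (-c) * rp D g :=
      rp_smul_pos hD hg (by linarith)
    have h3 : (fun x => c * g x) = (fun x => -((-c) * g x)) := by funext x; ring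
    rw [h3, h1, h2]; ring
  · have h3 : (fun x => (0:ℝ) * g x) = (fun _ => (0:ℝ)) := by funext x; ring
    rw [h3, rp_zero hD]; ring
  · exact rp_smul_pos hD hg hgt

/-- Membership in the natural extension of a linear prevision gives a gamble with
nonnegative prevision. -/
lemma Elp_mem {D : Set (Y → ℝ)} (hD : CoherentSDG D) {P : (Y → ℝ) → Set Y → EReal}
    (hP : ∀ p ∈ ({p : (Y → ℝ) × Set Y | IsGamble p.1 ∧ p.2 = Set.univ}), P p.1 p.2 = lpOf D p.1 p.2) :
    ∀ f ∈ ElpSet {p : (Y → ℝ) × Set Y | IsGamble p.1 ∧ p.2 = Set.univ} P,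
      IsGamble f ∧ 0 ≤ rp D f := by
  intro f hf
  obtain ⟨n, l, h, hl, hmem, rfl⟩ := hf
  have hgen : ∀ i, IsGamble (h i) ∧ 0 ≤ rp D (h i) := by
    intro i
    rcases hmem i with hA | hG
    · obtain ⟨p, hp, m, hlt, heq⟩ := hA
      obtain ⟨hg1, hB⟩ := hp
      have heq' : h i = fun x => p.1 x - m := by
        rw [heq]; funext x; rw [hB]; simp [ind]
      have hPg := hP p ⟨hg1, hB⟩
      rw [hPg, hB, lpOf_univ_eq hD hg1] at hlt
      have hmlt : m < rp D p.1 := EReal.coe_lt_coe_iff.1 hlt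
      have hrp : rp D (fun x => p.1 x - m) = rp D p.1 - m := rp_sub_const hD hg1 m
      refine ⟨?_, ?_⟩
      · rw [heq']; exact isGamble_sub_const' hg1 m
      · rw [heq', hrp]; linarith
    · exact ⟨hG.1, rp_nonneg hD hG.1 (fun x => hG.2.1 x)⟩
  have hsum : (∑ i, l i • h i) = fun x => ∑ i, l i * h i x := by
    funext x; simp [Finset.sum_apply]
  rw [hsum]
  refine ⟨isGamble_sum' _ _ (fun i => isGamble_smul' _ (hgen i).1), ?_⟩
  have hcomb := rp_comb hD Finset.univ l h hl (fun i => (hgen i).1)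
  have hnn : (0:ℝ) ≤ ∑ i, l i * rp D (h i) :=
    Finset.sum_nonneg fun i _ => mul_nonneg (hl i).le (hgen i).2
  exact hnn.trans hcomb

end AuxStmt19

section AuxStmt19b
variable {X1 X2 : Type*} [Nonempty X2]

lemma T_sum_le {D2 : Set (X2 → ℝ)} (hD2 : CoherentSDG D2)
    {ι : Type*} (s : Finset ι) (l : ι → ℝ) (k : ι → X1 × X2 → ℝ)
    (hl : ∀ i, 0 < l i) (hk : ∀ i, IsGamble (k i)) (x1 : X1) :
    ∑ i ∈ s, l i * rp D2 (fun x2 => k i (x1, x2)) ≤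
      rp D2 (fun x2 => ∑ i ∈ s, l i * k i (x1, x2)) := by
  classical
  induction s using Finset.cons_induction with
  | empty =>
    simp only [Finset.sum_empty]
    exact le_of_eq (rp_zero hD2).symm
  | cons a s ha ih =>
    simp only [Finset.sum_cons]
    have hka : IsGamble (fun x2 => k a (x1, x2)) := by
      obtain ⟨M, hM⟩ := hk a; exact ⟨M, fun x2 => hM _⟩
    have hsg : IsGamble (fun x2 => ∑ i ∈ s, l i * k i (x1, x2)) :=
      isGamble_sum' s (fun i => fun x2 => l i * k i (x1, x2))
        (fun i => by
          obtain ⟨M, hM⟩ := hk i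
          exact isGamble_smul' _ ⟨M, fun x2 => hM _⟩)
    have h1 : rp D2 (fun x2 => l a * k a (x1, x2)) +
        rp D2 (fun x2 => ∑ i ∈ s, l i * k i (x1, x2)) ≤
        rp D2 (fun x2 => l a * k a (x1, x2) + ∑ i ∈ s, l i * k i (x1, x2)) :=
      rp_superadd hD2 (isGamble_smul' _ hka) hsg
    have h2 : rp D2 (fun x2 => l a * k a (x1, x2)) = l a * rp D2 (fun x2 => k a (x1, x2)) :=
      rp_smul_pos hD2 hka (hl a)
    linarith

end AuxStmt19b

set_option maxHeartbeats 2000000 in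
/-- Proposition 20: for linear previsions `P1`, `P2`, the iterated
prevision `P1(P2(f))` lies between the independent natural extension and its
conjugate. -/
theorem stmt19 {X1 X2 : Type*} [Nonempty X1] [Nonempty X2]
    (F1 : Set (Set X1)) (F2 : Set (Set X2))
    (hF1 : ∀ A ∈ F1, A.Nonempty) (hF2 : ∀ A ∈ F2, A.Nonempty)
    (P1 : (X1 → ℝ) → Set X1 → EReal) (P2 : (X2 → ℝ) → Set X2 → EReal)
    (hP1 : Coherent {p : (X1 → ℝ) × Set X1 | IsGamble p.1 ∧ p.2 = Set.univ} P1)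
    (hP1c : ∀ f : X1 → ℝ, IsGamble f → P1 f Set.univ = -P1 (-f) Set.univ)
    (hP2 : Coherent {p : (X2 → ℝ) × Set X2 | IsGamble p.1 ∧ p.2 = Set.univ} P2)
    (hP2c : ∀ f : X2 → ℝ, IsGamble f → P2 f Set.univ = -P2 (-f) Set.univ)
    (f : X1 × X2 → ℝ) (hf : IsGamble f) :
    IsGamble (fun x1 => (P2 (fun x2 => f (x1, x2)) Set.univ).toReal) ∧
    lpProd {p : (X1 → ℝ) × Set X1 | IsGamble p.1 ∧ p.2 = Set.univ} P1
        {p : (X2 → ℝ) × Set X2 | IsGamble p.1 ∧ p.2 = Set.univ} P2 F1 F2 f Set.univ ≤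
      P1 (fun x1 => (P2 (fun x2 => f (x1, x2)) Set.univ).toReal) Set.univ ∧
    P1 (fun x1 => (P2 (fun x2 => f (x1, x2)) Set.univ).toReal) Set.univ ≤
      -lpProd {p : (X1 → ℝ) × Set X1 | IsGamble p.1 ∧ p.2 = Set.univ} P1
        {p : (X2 → ℝ) × Set X2 | IsGamble p.1 ∧ p.2 = Set.univ} P2 F1 F2 (-f) Set.univ := by
  classical
  obtain ⟨D1, hD1, hPe1⟩ := hP1
  obtain ⟨D2, hD2, hPe2⟩ := hP2
  obtain ⟨Mf, hMf⟩ := hf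
  -- the "T" operator: apply `rp D2` in the second coordinate
  have hTgamble : ∀ h : X1 × X2 → ℝ, IsGamble h →
      IsGamble (fun x1 => rp D2 (fun x2 => h (x1, x2))) := by
    rintro h ⟨M, hM⟩
    refine ⟨M, fun x1 => ?_⟩
    have hb := rp_bounds (M := M) hD2 (g := fun x2 => h (x1, x2)) (fun x2 => hM (x1, x2))
    exact abs_le.2 ⟨hb.1, hb.2⟩
  have hTfg : IsGamble (fun x1 => rp D2 (fun x2 => f (x1, x2))) :=
    hTgamble f ⟨Mf, hMf⟩
  have hTf_eq : (fun x1 => (P2 (fun x2 => f (x1, x2)) Set.univ).toReal) =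
      fun x1 => rp D2 (fun x2 => f (x1, x2)) := by
    funext x1
    have hg : IsGamble (fun x2 => f (x1, x2)) := ⟨Mf, fun x2 => hMf _⟩
    have h := hPe2 ((fun x2 => f (x1, x2)), Set.univ) ⟨hg, rfl⟩
    rw [h, lpOf_univ_eq hD2 hg, EReal.toReal_coe]
  have hP1Tf : P1 (fun x1 => rp D2 (fun x2 => f (x1, x2))) Set.univ =
      ((rp D1 (fun x1 => rp D2 (fun x2 => f (x1, x2))) : ℝ) : EReal) := by
    have h := hPe1 ((fun x1 => rp D2 (fun x2 => f (x1, x2))), Set.univ) ⟨hTfg, rfl⟩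
    rw [h]; exact lpOf_univ_eq hD1 hTfg
  -- the key claim: every gamble in the independent natural extension has a
  -- nonnegative iterated prevision
  have hkey : ∀ h ∈ indNatExt
      (ElpSet {p : (X1 → ℝ) × Set X1 | IsGamble p.1 ∧ p.2 = Set.univ} P1)
      (ElpSet {p : (X2 → ℝ) × Set X2 | IsGamble p.1 ∧ p.2 = Set.univ} P2) F1 F2,
      IsGamble h ∧ 0 ≤ rp D1 (fun x1 => rp D2 (fun x2 => h (x1, x2))) := by
    intro h hh
    obtain ⟨n, l, kf, hl, hmem, rfl⟩ := hh
    have hgen : ∀ i, IsGamble (kf i) ∧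
        0 ≤ rp D1 (fun x1 => rp D2 (fun x2 => kf i (x1, x2))) := by
      intro i
      rcases hmem i with (hA12 | hA21) | hG
      · -- A12 : k = f2 ⋅ 1_{B1}
        obtain ⟨f2, hf2, B1, hB1, heq⟩ := hA12
        obtain ⟨hf2g, hf2rp⟩ := Elp_mem hD2 hPe2 f2 hf2
        obtain ⟨M2, hM2⟩ := hf2g
        have hM2nn : 0 ≤ M2 := (abs_nonneg _).trans (hM2 (Classical.arbitrary X2))
        have hkg : IsGamble (kf i) := by
          rw [heq]
          refine ⟨M2, fun p => ?_⟩
          rw [abs_mul]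
          calc |f2 p.2| * |ind B1 p.1| ≤ M2 * 1 :=
                mul_le_mul (hM2 p.2) (ind_abs_le' B1 p.1) (abs_nonneg _) hM2nn
          _ = M2 := mul_one _
        refine ⟨hkg, rp_nonneg hD1 (hTgamble _ hkg) fun x1 => ?_⟩
        have e : (fun x2 => kf i (x1, x2)) = fun x2 => f2 x2 * ind B1 x1 := by
          funext x2; rw [heq]
        rw [e]
        by_cases hx : x1 ∈ B1
        · have e2 : (fun x2 => f2 x2 * ind B1 x1) = f2 := by
            funext x2; simp [ind, Set.indicator_of_mem hx]
          rw [e2]; exact hf2rp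
        · have e2 : (fun x2 => f2 x2 * ind B1 x1) = fun _ => (0:ℝ) := by
            funext x2; simp [ind, Set.indicator_of_notMem hx]
          rw [e2, rp_zero hD2]
      · -- A21 : k = f1 ⋅ 1_{B2}
        obtain ⟨f1, hf1, B2, hB2, heq⟩ := hA21
        obtain ⟨hf1g, hf1rp⟩ := Elp_mem hD1 hPe1 f1 hf1
        obtain ⟨M1, hM1⟩ := hf1g
        have hM1nn : 0 ≤ M1 := (abs_nonneg _).trans (hM1 (Classical.arbitrary X1))
        have hkg : IsGamble (kf i) := by
          rw [heq]
          refine ⟨M1, fun p => ?_⟩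
          rw [abs_mul]
          calc |f1 p.1| * |ind B2 p.2| ≤ M1 * 1 :=
                mul_le_mul (hM1 p.1) (ind_abs_le' B2 p.2) (abs_nonneg _) hM1nn
          _ = M1 := mul_one _
        refine ⟨hkg, ?_⟩
        have hβnn : 0 ≤ rp D2 (ind B2) :=
          rp_nonneg hD2 (isGamble_ind' B2) (ind_nonneg' B2)
        have hTk : (fun x1 => rp D2 (fun x2 => kf i (x1, x2))) =
            fun x1 => f1 x1 * rp D2 (ind B2) := by
          funext x1
          have e : (fun x2 => kf i (x1, x2)) = fun x2 => f1 x1 * ind B2 x2 := by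
            funext x2; rw [heq]
          rw [e]
          exact rp_smul_all hD2 hPe2 hP2c (isGamble_ind' B2) (f1 x1)
        rw [hTk]
        rcases eq_or_lt_of_le hβnn with hβ0 | hβpos
        · have e2 : (fun x1 => f1 x1 * rp D2 (ind B2)) = fun _ => (0:ℝ) := by
            funext x1; rw [← hβ0, mul_zero]
          rw [e2, rp_zero hD1]
        · have e2 : (fun x1 => f1 x1 * rp D2 (ind B2)) =
              fun x1 => rp D2 (ind B2) * f1 x1 := by
            funext x1; ring
          rw [e2, rp_smul_pos hD1 ⟨M1, hM1⟩ hβpos]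
          exact mul_nonneg hβnn hf1rp
      · -- Gpos
        obtain ⟨hkg, hk0, -⟩ := hG
        refine ⟨hkg, rp_nonneg hD1 (hTgamble _ hkg) fun x1 => ?_⟩
        refine rp_nonneg hD2 ?_ fun x2 => hk0 (x1, x2)
        obtain ⟨M, hM⟩ := hkg
        exact ⟨M, fun x2 => hM _⟩
    have hsum : (∑ i, l i • kf i) = fun p => ∑ i, l i * kf i p := by
      funext p; simp [Finset.sum_apply]
    have hG : IsGamble (fun p : X1 × X2 => ∑ i, l i * kf i p) :=
      isGamble_sum' _ _ (fun i => isGamble_smul' _ (hgen i).1)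
    constructor
    · rw [hsum]; exact hG
    · have eT : (fun x1 => rp D2 (fun x2 => (∑ i, l i • kf i) (x1, x2))) =
          fun x1 => rp D2 (fun x2 => ∑ i, l i * kf i (x1, x2)) := by
        funext x1; congr 1; funext x2; simp [Finset.sum_apply]
      rw [eT]
      have hTi : ∀ i, IsGamble (fun x1 => rp D2 (fun x2 => kf i (x1, x2))) :=
        fun i => hTgamble _ (hgen i).1
      have step1 : (0:ℝ) ≤
          ∑ i, l i * rp D1 (fun x1 => rp D2 (fun x2 => kf i (x1, x2))) :=
        Finset.sum_nonneg fun i _ => mul_nonneg (hl i).le (hgen i).2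
      have step2 : ∑ i, l i * rp D1 (fun x1 => rp D2 (fun x2 => kf i (x1, x2))) ≤
          rp D1 (fun x1 => ∑ i, l i * rp D2 (fun x2 => kf i (x1, x2))) :=
        rp_comb hD1 Finset.univ l
          (fun i => fun x1 => rp D2 (fun x2 => kf i (x1, x2))) hl hTi
      have step3 : rp D1 (fun x1 => ∑ i, l i * rp D2 (fun x2 => kf i (x1, x2))) ≤
          rp D1 (fun x1 => rp D2 (fun x2 => ∑ i, l i * kf i (x1, x2))) := by
        refine rp_mono hD1
          (isGamble_sum' _ (fun i => fun x1 => l i * rp D2 (fun x2 => kf i (x1, x2)))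
            (fun i => isGamble_smul' _ (hTi i)))
          (hTgamble _ hG)
          (fun x1 => T_sum_le hD2 Finset.univ l kf hl (fun i => (hgen i).1) x1)
      linarith
  refine ⟨?_, ?_, ?_⟩
  · rw [hTf_eq]; exact hTfg
  · rw [hTf_eq, hP1Tf, lpProd, lpOf]
    refine sSup_le ?_
    rintro x ⟨m, hm, rfl⟩
    rw [EReal.coe_le_coe_iff]
    have hm' : (fun p : X1 × X2 => f p - m) ∈ indNatExt
        (ElpSet {p : (X1 → ℝ) × Set X1 | IsGamble p.1 ∧ p.2 = Set.univ} P1)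
        (ElpSet {p : (X2 → ℝ) × Set X2 | IsGamble p.1 ∧ p.2 = Set.univ} P2) F1 F2 := by
      have e : (fun p : X1 × X2 => (f p - m) * ind Set.univ p) =
          fun p : X1 × X2 => f p - m := by
        funext p; simp [ind]
      rw [← e]; exact hm
    have hk := (hkey _ hm').2
    have e2 : (fun x1 => rp D2 (fun x2 => (fun p : X1 × X2 => f p - m) (x1, x2))) =
        fun x1 => rp D2 (fun x2 => f (x1, x2)) - m := by
      funext x1
      exact rp_sub_const hD2 ⟨Mf, fun x2 => hMf _⟩ m
    rw [e2] at hk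
    have e3 : rp D1 (fun x1 => rp D2 (fun x2 => f (x1, x2)) - m) =
        rp D1 (fun x1 => rp D2 (fun x2 => f (x1, x2))) - m :=
      rp_sub_const hD1 hTfg m
    linarith
  · rw [hTf_eq, hP1Tf]
    apply EReal.le_neg_of_le_neg
    rw [← EReal.coe_neg, lpProd, lpOf]
    refine sSup_le ?_
    rintro x ⟨m, hm, rfl⟩
    rw [EReal.coe_le_coe_iff]
    have hm' : (fun p : X1 × X2 => -f p - m) ∈ indNatExt
        (ElpSet {p : (X1 → ℝ) × Set X1 | IsGamble p.1 ∧ p.2 = Set.univ} P1)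
        (ElpSet {p : (X2 → ℝ) × Set X2 | IsGamble p.1 ∧ p.2 = Set.univ} P2) F1 F2 := by
      have e : (fun p : X1 × X2 => ((-f) p - m) * ind Set.univ p) =
          fun p : X1 × X2 => -f p - m := by
        funext p; simp [ind]
      rw [← e]; exact hm
    have hk := (hkey _ hm').2
    have hnfg : IsGamble (fun p : X1 × X2 => -f p) :=
      ⟨Mf, fun p => by rw [abs_neg]; exact hMf p⟩
    have e2 : (fun x1 => rp D2 (fun x2 => (fun p : X1 × X2 => -f p - m) (x1, x2))) =
        fun x1 => rp D2 (fun x2 => -f (x1, x2)) - m := by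
      funext x1
      exact rp_sub_const hD2 ⟨Mf, fun x2 => by rw [abs_neg]; exact hMf _⟩ m
    rw [e2] at hk
    have e3 : rp D1 (fun x1 => rp D2 (fun x2 => -f (x1, x2)) - m) =
        rp D1 (fun x1 => rp D2 (fun x2 => -f (x1, x2))) - m :=
      rp_sub_const hD1 (hTgamble _ hnfg) m
    have e4 : (fun x1 => rp D2 (fun x2 => -f (x1, x2))) =
        fun x1 => -rp D2 (fun x2 => f (x1, x2)) := by
      funext x1
      exact rp_neg hD2 hPe2 hP2c ⟨Mf, fun x2 => hMf _⟩
    have e5 : rp D1 (fun x1 => -rp D2 (fun x2 => f (x1, x2))) =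
        -rp D1 (fun x1 => rp D2 (fun x2 => f (x1, x2))) :=
      rp_neg hD1 hPe1 hP1c hTfg
    rw [e4, e5] at e3
    linarith

end IPaper
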